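/- If X is a separable topological group, then there exists a countable set S ⊆ X such that X = U·S·U for every neighborhood U of the identity. -/

import Mathlib

open Pointwise

theorem stmt1 (X : Type*) [Group X] [TopologicalSpace X] [IsTopologicalGroup X]
    [TopologicalSpace.SeparableSpace X] :
    ∃ S : Set X, S.Countable ∧ ∀ U ∈ nhds (1 : X), U * S * U = Set.univ := by
  obtain ⟨S, hSc, hSd⟩ := TopologicalSpace.exists_countable_dense X
  refine ⟨S, hSc, fun U hU => ?_⟩
  ext x
  simp only [Set.mem_univ, iff_true]
  obtain ⟨V, hVU, hVo, hV1⟩ := mem_nhds_iff.mp hU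
  have hopen : IsOpen (V⁻¹ * {x} * V⁻¹) := hVo.inv.mul_left
  have hxmem : x ∈ V⁻¹ * {x} * V⁻¹ :=
    ⟨1 * x, ⟨1, by simpa using hV1, x, rfl, rfl⟩, 1⁻¹, by simpa using hV1, by simp⟩
  obtain ⟨s, hs, hsS⟩ := hSd.inter_open_nonempty _ hopen ⟨x, hxmem⟩
  obtain ⟨_, ⟨a, ha, y, hy, rfl⟩, b, hb, rfl⟩ := hs
  obtain rfl : y = x := hy
  have haV : a⁻¹ ∈ V := by simpa using ha
  have hbV : b⁻¹ ∈ V := by simpa using hb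
  exact ⟨a⁻¹ * (a * y * b), ⟨a⁻¹, hVU haV, a * y * b, hsS, rfl⟩, b⁻¹, hVU hbV, by group⟩
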